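/- arXiv:0901.1277 — 5 statements merged into one kernel-verified Lean document; each statement's English description precedes it below -/
import Mathlib

section
/- Let a, b > 0 with a^2 > 4b, and let Y be the solution of y'' + a y' + b y = 0 with Y(0) = 0, Y'(0) = 1. Then for every t ≥ 0, ∫₀ᵗ |Y'(s)| ds ≤ 2a / (√(a²-4b) · (a - √(a²-4b))). -/
private lemma ode_decay (a b r c : ℝ) (Y : ℝ → ℝ)
    (hY1 : Differentiable ℝ Y) (hY2 : Differentiable ℝ (deriv Y))
    (hode : ∀ t : ℝ, deriv (deriv Y) t + a * deriv Y t + b * Y t = 0)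
    (hsum : r + c = -a) (hmul : r * c = b) (t : ℝ) :
    deriv Y t - r * Y t = Real.exp (c * t) * (deriv Y 0 - r * Y 0) := by
  set g : ℝ → ℝ := fun t => Real.exp (-c * t) * (deriv Y t - r * Y t) with hg
  have hder : ∀ s : ℝ, HasDerivAt g 0 s := by
    intro s
    have h1 : HasDerivAt (fun x : ℝ => Real.exp (-c * x)) (Real.exp (-c * s) * (-c)) s := by
      simpa using ((hasDerivAt_id s).const_mul (-c)).exp
    have h2 : HasDerivAt (fun x => deriv Y x - r * Y x)
        (deriv (deriv Y) s - r * deriv Y s) s :=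
      ((hY2 s).hasDerivAt).sub (((hY1 s).hasDerivAt).const_mul r)
    have h3 := h1.mul h2
    refine h3.congr_deriv ?_
    have h4 := hode s
    linear_combination (Real.exp (-c * s)) * h4
      - Real.exp (-c * s) * deriv Y s * hsum + Real.exp (-c * s) * Y s * hmul
  have hconst : g t = g 0 :=
    is_const_of_deriv_eq_zero (fun s => (hder s).differentiableAt)
      (fun s => (hder s).deriv) t 0
  have he : Real.exp (-c * t) ≠ 0 := Real.exp_ne_zero _
  have h0 : g 0 = deriv Y 0 - r * Y 0 := by simp [hg]
  rw [h0] at hconst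
  have : Real.exp (-c * t) * (deriv Y t - r * Y t) = deriv Y 0 - r * Y 0 := hconst
  have hexp : Real.exp (c * t) * Real.exp (-c * t) = 1 := by
    rw [← Real.exp_add]; ring_nf; exact Real.exp_zero
  calc deriv Y t - r * Y t
      = Real.exp (c * t) * Real.exp (-c * t) * (deriv Y t - r * Y t) := by rw [hexp]; ring
    _ = Real.exp (c * t) * (deriv Y 0 - r * Y 0) := by rw [mul_assoc, this]

private lemma integral_exp_mul' (r t : ℝ) (hr : r ≠ 0) :
    ∫ s in (0:ℝ)..t, Real.exp (r * s) = (Real.exp (r * t) - 1) / r := by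
  have hd : ∀ s ∈ Set.uIcc (0:ℝ) t,
      HasDerivAt (fun x : ℝ => Real.exp (r * x) / r) (Real.exp (r * s)) s := by
    intro s _
    have h1 : HasDerivAt (fun x : ℝ => Real.exp (r * x)) (Real.exp (r * s) * r) s := by
      have := (Real.hasDerivAt_exp (r * s)).comp s ((hasDerivAt_id s).const_mul r)
      simpa [mul_comm, Function.comp_def] using this
    have := h1.div_const r
    simpa [mul_div_assoc, mul_div_cancel_right₀ _ hr] using this
  have hint : IntervalIntegrable (fun s => Real.exp (r * s)) MeasureTheory.volume 0 t :=
    (Real.continuous_exp.comp (continuous_const.mul continuous_id)).intervalIntegrable 0 t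
  rw [intervalIntegral.integral_eq_sub_of_hasDerivAt hd hint]
  simp [div_sub_div_same, mul_zero]
  ring

/-- Overdamped case a² > 4b: ∫₀ᵗ |Y'| ≤ 2a / (√(a²-4b)(a - √(a²-4b))). -/
theorem integral_abs_Y'_le (a b : ℝ) (ha : 0 < a) (hb : 0 < b) (hd : a ^ 2 > 4 * b)
    (Y : ℝ → ℝ)
    (hY1 : Differentiable ℝ Y) (hY2 : Differentiable ℝ (deriv Y))
    (hode : ∀ t : ℝ, deriv (deriv Y) t + a * deriv Y t + b * Y t = 0)
    (h0 : Y 0 = 0) (h0' : deriv Y 0 = 1) :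
    ∀ t ≥ (0 : ℝ), (∫ s in (0 : ℝ)..t, |deriv Y s|) ≤
      2 * a / (Real.sqrt (a ^ 2 - 4 * b) * (a - Real.sqrt (a ^ 2 - 4 * b))) := by
  intro t ht
  set δ := Real.sqrt (a ^ 2 - 4 * b) with hδdef
  have hδpos : 0 < δ := Real.sqrt_pos.mpr (by linarith)
  have hδsq : δ ^ 2 = a ^ 2 - 4 * b := Real.sq_sqrt (by linarith)
  have hδa : δ < a := by nlinarith
  set r₁ := (-a + δ) / 2 with hr₁def
  set r₂ := (-a - δ) / 2 with hr₂def
  have hr₁neg : r₁ < 0 := by rw [hr₁def]; linarith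
  have hr₂neg : r₂ < 0 := by rw [hr₂def]; linarith
  have hsum : r₁ + r₂ = -a := by rw [hr₁def, hr₂def]; ring
  have hprod : r₁ * r₂ = b := by rw [hr₁def, hr₂def]; nlinarith
  have hdiff : r₁ - r₂ = δ := by rw [hr₁def, hr₂def]; ring
  have hA : ∀ s, deriv Y s - r₁ * Y s = Real.exp (r₂ * s) := by
    intro s
    have := ode_decay a b r₁ r₂ Y hY1 hY2 hode hsum hprod s
    rw [h0, h0'] at this; simpa using this
  have hB : ∀ s, deriv Y s - r₂ * Y s = Real.exp (r₁ * s) := by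
    intro s
    have := ode_decay a b r₂ r₁ Y hY1 hY2 hode (by linarith) (by linarith [hprod, mul_comm r₁ r₂]) s
    rw [h0, h0'] at this; simpa using this
  have hY' : ∀ s, deriv Y s = (r₁ * Real.exp (r₁ * s) - r₂ * Real.exp (r₂ * s)) / δ := by
    intro s
    have key : (r₁ - r₂) * deriv Y s = r₁ * Real.exp (r₁ * s) - r₂ * Real.exp (r₂ * s) := by
      linear_combination r₁ * hB s - r₂ * hA s
    rw [hdiff] at key
    field_simp
    have hc : Real.exp (s * r₂) = Real.exp (r₂ * s) := by rw [mul_comm]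
    rw [hc]
    linarith [key]
  -- pointwise bound
  have hbound : ∀ s, |deriv Y s| ≤ ((-r₁) * Real.exp (r₁ * s) + (-r₂) * Real.exp (r₂ * s)) / δ := by
    intro s
    rw [hY', abs_div, abs_of_pos hδpos]
    gcongr
    calc |r₁ * Real.exp (r₁ * s) - r₂ * Real.exp (r₂ * s)|
        ≤ |r₁ * Real.exp (r₁ * s)| + |r₂ * Real.exp (r₂ * s)| := abs_sub _ _
      _ = (-r₁) * Real.exp (r₁ * s) + (-r₂) * Real.exp (r₂ * s) := by
          rw [abs_mul, abs_mul, abs_of_pos (Real.exp_pos _), abs_of_pos (Real.exp_pos _),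
            abs_of_neg hr₁neg, abs_of_neg hr₂neg]
  have hcont : Continuous (deriv Y) := hY2.continuous
  have hint1 : IntervalIntegrable (fun s => |deriv Y s|) MeasureTheory.volume 0 t :=
    (hcont.abs).intervalIntegrable 0 t
  have hcont2 : Continuous (fun s => ((-r₁) * Real.exp (r₁ * s) + (-r₂) * Real.exp (r₂ * s)) / δ) := by
    fun_prop
  have hint2 : IntervalIntegrable (fun s => ((-r₁) * Real.exp (r₁ * s) + (-r₂) * Real.exp (r₂ * s)) / δ) MeasureTheory.volume 0 t :=
    hcont2.intervalIntegrable 0 t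
  have hmono : (∫ s in (0:ℝ)..t, |deriv Y s|)
      ≤ ∫ s in (0:ℝ)..t, ((-r₁) * Real.exp (r₁ * s) + (-r₂) * Real.exp (r₂ * s)) / δ :=
    intervalIntegral.integral_mono_on ht hint1 hint2 (fun s _ => hbound s)
  have hcomp : (∫ s in (0:ℝ)..t, ((-r₁) * Real.exp (r₁ * s) + (-r₂) * Real.exp (r₂ * s)) / δ)
      = ((-r₁) * ((Real.exp (r₁ * t) - 1) / r₁) + (-r₂) * ((Real.exp (r₂ * t) - 1) / r₂)) / δ := by
    have e1 : IntervalIntegrable (fun s => (-r₁) * Real.exp (r₁ * s)) MeasureTheory.volume 0 t := by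
      exact (by fun_prop : Continuous fun s => (-r₁) * Real.exp (r₁ * s)).intervalIntegrable 0 t
    have e2 : IntervalIntegrable (fun s => (-r₂) * Real.exp (r₂ * s)) MeasureTheory.volume 0 t := by
      exact (by fun_prop : Continuous fun s => (-r₂) * Real.exp (r₂ * s)).intervalIntegrable 0 t
    rw [intervalIntegral.integral_div, intervalIntegral.integral_add e1 e2,
      intervalIntegral.integral_const_mul, intervalIntegral.integral_const_mul,
      integral_exp_mul' r₁ t hr₁neg.ne, integral_exp_mul' r₂ t hr₂neg.ne]
  rw [hcomp] at hmono
  have hexp1 : 0 < Real.exp (r₁ * t) := Real.exp_pos _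
  have hexp1' : Real.exp (r₁ * t) ≤ 1 := Real.exp_le_one_iff.mpr (by nlinarith)
  have hexp2 : 0 < Real.exp (r₂ * t) := Real.exp_pos _
  have hexp2' : Real.exp (r₂ * t) ≤ 1 := Real.exp_le_one_iff.mpr (by nlinarith)
  have hval : ((-r₁) * ((Real.exp (r₁ * t) - 1) / r₁) + (-r₂) * ((Real.exp (r₂ * t) - 1) / r₂)) / δ
      = ((1 - Real.exp (r₁ * t)) + (1 - Real.exp (r₂ * t))) / δ := by
    have aux : ∀ r E : ℝ, r ≠ 0 → (-r) * ((E - 1) / r) = 1 - E := by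
      intro r E hr; field_simp; ring
    rw [aux _ _ hr₁neg.ne, aux _ _ hr₂neg.ne]
  rw [hval] at hmono
  have h2δ : ((1 - Real.exp (r₁ * t)) + (1 - Real.exp (r₂ * t))) / δ ≤ 2 / δ := by
    gcongr
    linarith
  have hfinal : 2 / δ ≤ 2 * a / (δ * (a - δ)) := by
    rw [div_le_div_iff₀ hδpos (mul_pos hδpos (by linarith))]
    nlinarith
  linarith
end

section
/- Let a, b > 0 with a² ≥ 4b, and suppose 0 ≤ τ with τ b < a. Then for the autonomous delay equation x''(t) + a x'(t) + b x(t-τ) = 0, every root λ ∈ ℂ of the characteristic equation λ² + aλ + b e^{-λτ} = 0 satisfies Re λ < 0. -/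
lemma abs_one_sub_exp_neg_le (z : ℂ) (hz : 0 ≤ z.re) :
    ‖1 - Complex.exp (-z)‖ ≤ ‖z‖ := by
  have hderiv : ∀ t ∈ Set.Icc (0:ℝ) 1,
      HasDerivWithinAt (fun t : ℝ => Complex.exp (-(t:ℂ) * z))
        (-z * Complex.exp (-(t:ℂ) * z)) (Set.Icc (0:ℝ) 1) t := by
    intro t _
    have h1 : HasDerivAt (fun w : ℂ => Complex.exp (-w * z))
        (-z * Complex.exp (-(t:ℂ) * z)) (t:ℂ) := by
      have := ((hasDerivAt_id ((t:ℂ))).neg.mul_const z).cexp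
      refine this.congr_deriv ?_
      simp only [Pi.neg_apply, id_eq]
      ring
    exact (h1.comp_ofReal).hasDerivWithinAt
  have hbound : ∀ t ∈ Set.Icc (0:ℝ) 1,
      ‖-z * Complex.exp (-(t:ℂ) * z)‖ ≤ ‖z‖ := by
    intro t ht
    have hre : (-(t:ℂ) * z).re = -(t * z.re) := by
      simp [Complex.mul_re]
    have : ‖-z * Complex.exp (-(t:ℂ) * z)‖
        = ‖z‖ * Real.exp (-(t * z.re)) := by
      rw [norm_mul, norm_neg,
        Complex.norm_exp, hre]
    rw [this]
    have hexp : Real.exp (-(t * z.re)) ≤ 1 := by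
      rw [Real.exp_le_one_iff]
      have := mul_nonneg ht.1 hz
      linarith
    calc ‖z‖ * Real.exp (-(t * z.re)) ≤ ‖z‖ * 1 :=
          mul_le_mul_of_nonneg_left hexp (norm_nonneg z)
      _ = ‖z‖ := mul_one _
  have h := Convex.norm_image_sub_le_of_norm_hasDerivWithin_le hderiv hbound
    (convex_Icc 0 1) (Set.left_mem_Icc.2 zero_le_one) (Set.right_mem_Icc.2 zero_le_one)
  have h2 : ‖Complex.exp (-z) - 1‖ ≤ ‖z‖ := by
    simpa using h
  have h3 : (1:ℂ) - Complex.exp (-z) = -(Complex.exp (-z) - 1) := by ring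
  rw [h3, norm_neg]
  exact h2

set_option maxHeartbeats 1000000 in
/-- Burton's condition: if a,b > 0, a² ≥ 4b, 0 ≤ τ and τb < a, then every root of
λ² + aλ + b e^{-λτ} = 0 has negative real part. -/
theorem characteristic_roots_negative (a b τ : ℝ) (ha : 0 < a) (hb : 0 < b)
    (hd : a ^ 2 ≥ 4 * b) (hτ : 0 ≤ τ) (hτb : τ * b < a)
    (lam : ℂ)
    (hroot : lam ^ 2 + (a : ℂ) * lam + (b : ℂ) * Complex.exp (-lam * (τ : ℂ)) = 0) :
    lam.re < 0 := by
  by_contra hcon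
  push_neg at hcon
  -- lam ≠ 0
  have hlam0 : lam ≠ 0 := by
    intro h0
    rw [h0] at hroot
    simp at hroot
    exact hb.ne' (by exact_mod_cast hroot)
  have hm : 0 < ‖lam‖ := norm_pos_iff.mpr hlam0
  set m := ‖lam‖ with hmdef
  -- rewrite exponent
  have hexpeq : -lam * (τ:ℂ) = -(lam * τ) := by ring
  rw [hexpeq] at hroot
  -- key equation
  have heq : lam ^ 2 + (a:ℂ) * lam + b = (b:ℂ) * (1 - Complex.exp (-(lam * τ))) := by
    linear_combination hroot
  -- real roots of the quadratic
  set s := Real.sqrt (a ^ 2 - 4 * b) with hsdef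
  have hs0 : 0 ≤ s := Real.sqrt_nonneg _
  have hs2 : s ^ 2 = a ^ 2 - 4 * b := Real.sq_sqrt (by linarith)
  set r₁ := (a + s) / 2 with hr1def
  set r₂ := (a - s) / 2 with hr2def
  have hsum : r₁ + r₂ = a := by rw [hr1def, hr2def]; ring
  have hprod : r₁ * r₂ = b := by rw [hr1def, hr2def]; nlinarith [hs2]
  have hsa : s ≤ a := by nlinarith [hs2, hb]
  have hr1 : 0 ≤ r₁ := by rw [hr1def]; linarith
  have hr2 : 0 ≤ r₂ := by rw [hr2def]; linarith
  -- factorization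
  have h1 : (r₁:ℂ) + r₂ = a := by exact_mod_cast congrArg (Complex.ofReal) hsum
  have h2 : (r₁:ℂ) * r₂ = b := by exact_mod_cast congrArg (Complex.ofReal) hprod
  have hfac : (lam + r₁) * (lam + r₂) = lam ^ 2 + (a:ℂ) * lam + b := by
    linear_combination lam * h1 + h2
  set A := ‖lam + r₁‖ with hAdef
  set B := ‖lam + r₂‖ with hBdef
  -- upper bound
  have hzre : 0 ≤ (lam * τ).re := by
    rw [Complex.mul_re]
    simp [mul_nonneg hcon hτ]
  have hub : A * B ≤ b * (m * τ) := by
    have : A * B = ‖(b:ℂ) * (1 - Complex.exp (-(lam * τ)))‖ := by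
      rw [hAdef, hBdef, ← norm_mul, hfac, heq]
    rw [this, norm_mul, Complex.norm_real, Real.norm_of_nonneg hb.le]
    have h3 := abs_one_sub_exp_neg_le (lam * τ) hzre
    have h4 : ‖lam * τ‖ = m * τ := by
      rw [norm_mul, Complex.norm_real, Real.norm_of_nonneg hτ, hmdef]
    rw [h4] at h3
    exact mul_le_mul_of_nonneg_left h3 hb.le
  -- lower bounds
  have hA2 : r₁ ^ 2 + m ^ 2 ≤ A ^ 2 := by
    have hA : A ^ 2 = (lam.re + r₁) ^ 2 + lam.im ^ 2 := by
      rw [hAdef, Complex.sq_norm, Complex.normSq_apply]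
      simp [Complex.add_re, Complex.add_im]; ring
    have hmm : m ^ 2 = lam.re ^ 2 + lam.im ^ 2 := by
      rw [hmdef, Complex.sq_norm, Complex.normSq_apply]; ring
    nlinarith [mul_nonneg hcon hr1]
  have hB2 : r₂ ^ 2 + m ^ 2 ≤ B ^ 2 := by
    have hB : B ^ 2 = (lam.re + r₂) ^ 2 + lam.im ^ 2 := by
      rw [hBdef, Complex.sq_norm, Complex.normSq_apply]
      simp [Complex.add_re, Complex.add_im]; ring
    have hmm : m ^ 2 = lam.re ^ 2 + lam.im ^ 2 := by
      rw [hmdef, Complex.sq_norm, Complex.normSq_apply]; ring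
    nlinarith [mul_nonneg hcon hr2]
  have hAn : 0 ≤ A := norm_nonneg _
  have hBn : 0 ≤ B := norm_nonneg _
  have hlb : a * m ≤ A * B := by
    have e1 : (r₁ ^ 2 + m ^ 2) * (r₂ ^ 2 + m ^ 2) ≤ A ^ 2 * B ^ 2 :=
      mul_le_mul hA2 hB2 (by positivity) (sq_nonneg A)
    have e2 : ((r₁ + r₂) * m) ^ 2 ≤ (r₁ ^ 2 + m ^ 2) * (r₂ ^ 2 + m ^ 2) := by
      nlinarith [sq_nonneg (r₁ * r₂ - m ^ 2)]
    have hsq : (a * m) ^ 2 ≤ (A * B) ^ 2 := by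
      rw [← hsum]
      calc ((r₁ + r₂) * m) ^ 2 ≤ (r₁ ^ 2 + m ^ 2) * (r₂ ^ 2 + m ^ 2) := e2
        _ ≤ A ^ 2 * B ^ 2 := e1
        _ = (A * B) ^ 2 := by ring
    have := Real.sqrt_le_sqrt hsq
    rwa [Real.sqrt_sq (mul_nonneg ha.le hm.le), Real.sqrt_sq (mul_nonneg hAn hBn)] at this
  have : a * m ≤ (τ * b) * m := by
    calc a * m ≤ A * B := hlb
      _ ≤ b * (m * τ) := hub
      _ = (τ * b) * m := by ring
  nlinarith [mul_lt_mul_of_pos_right hτb hm]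
end

section
/- Let a, b : [t₀,∞) → ℝ be measurable with a(t) ≥ a₀ > 0, b(t) ≥ b₀ > 0, b(t) ≤ B, and a₀² ≥ 4B. Then any solution Y(·,s) of y''(t) + a(t) y'(t) + b(t) y(t) = 0 for t ≥ s with y(s) = 0, y'(s) = 1 satisfies Y(t,s) > 0 for all t > s ≥ t₀. -/
/-- Positivity of the fundamental function of y'' + a(t) y' + b(t) y = 0
under the strong overdamping condition a₀² ≥ 4B. -/
theorem nonautonomous_fundamental_positive (t₀ a₀ b₀ B : ℝ) (a b : ℝ → ℝ)
    (hma : Measurable a) (hmb : Measurable b)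
    (ha₀ : 0 < a₀) (hb₀ : 0 < b₀)
    (halow : ∀ t ≥ t₀, a₀ ≤ a t) (hblow : ∀ t ≥ t₀, b₀ ≤ b t)
    (hbup : ∀ t ≥ t₀, b t ≤ B) (hd : a₀ ^ 2 ≥ 4 * B)
    (s : ℝ) (hs : t₀ ≤ s)
    (y y' y'' : ℝ → ℝ)
    (hy' : ∀ t ≥ s, HasDerivAt y (y' t) t)
    (hy'' : ∀ t ≥ s, HasDerivAt y' (y'' t) t)
    (hode : ∀ t ≥ s, y'' t + a t * y' t + b t * y t = 0)
    (h1 : y s = 0) (h2 : y' s = 1) :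
    ∀ t > s, y t > 0 := by
  have hBpos : 0 < B := lt_of_lt_of_le hb₀ (le_trans (hblow s hs) (hbup s hs))
  -- get the smaller root μ of x² - a₀ x + B = 0
  obtain ⟨μ, hμpos, hμlt, hμB⟩ : ∃ μ : ℝ, 0 < μ ∧ μ < a₀ ∧ μ * (a₀ - μ) = B := by
    refine ⟨(a₀ - Real.sqrt (a₀ ^ 2 - 4 * B)) / 2, ?_, ?_, ?_⟩
    · have hDnn : 0 ≤ Real.sqrt (a₀ ^ 2 - 4 * B) := Real.sqrt_nonneg _
      have hD2 : Real.sqrt (a₀ ^ 2 - 4 * B) ^ 2 = a₀ ^ 2 - 4 * B :=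
        Real.sq_sqrt (by linarith)
      nlinarith
    · have hDnn : 0 ≤ Real.sqrt (a₀ ^ 2 - 4 * B) := Real.sqrt_nonneg _
      linarith
    · have hD2 : Real.sqrt (a₀ ^ 2 - 4 * B) ^ 2 = a₀ ^ 2 - 4 * B :=
        Real.sq_sqrt (by linarith)
      nlinarith
  obtain ⟨q, hqdef⟩ : ∃ q : ℝ → ℝ, q = fun τ => y' τ + μ * y τ := ⟨_, rfl⟩
  have hqval : ∀ τ, q τ = y' τ + μ * y τ := fun τ => by rw [hqdef]
  have hqs : q s = 1 := by rw [hqval, h1, h2]; ring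
  have hcy : ∀ τ, s ≤ τ → ContinuousAt y τ := fun τ hτ => (hy' τ hτ).continuousAt
  have hcy' : ∀ τ, s ≤ τ → ContinuousAt y' τ := fun τ hτ => (hy'' τ hτ).continuousAt
  have hcq : ∀ τ, s ≤ τ → ContinuousAt q τ := by
    intro τ hτ
    rw [hqdef]
    exact (hcy' τ hτ).add ((hcy τ hτ).const_smul μ)
  have hdq : ∀ τ, s ≤ τ →
      HasDerivAt q ((μ - a τ) * q τ + (μ * a τ - μ ^ 2 - b τ) * y τ) τ := by
    intro τ hτ
    have h : HasDerivAt (fun x => y' x + μ * y x) (y'' τ + μ * y' τ) τ :=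
      (hy'' τ hτ).add ((hy' τ hτ).const_mul μ)
    rw [hqdef]
    convert h using 1
    have hψ := hode τ hτ
    beta_reduce
    linear_combination -hψ
  -- coefficient nonnegativity
  have hdcoef : ∀ τ, s ≤ τ → 0 ≤ μ * a τ - μ ^ 2 - b τ := by
    intro τ hτ
    have ha1 := halow τ (le_trans hs hτ)
    have hb1 := hbup τ (le_trans hs hτ)
    nlinarith
  -- continuity of q near s gives a δ with q > 1/2 on the δ-ball
  obtain ⟨δ, hδpos, hδ⟩ := Metric.continuousAt_iff.mp (hcq s le_rfl) (1/2) (by norm_num)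
  have hqnear : ∀ τ, |τ - s| < δ → 1/2 < q τ := by
    intro τ hτ
    have := hδ (show dist τ s < δ by simpa [Real.dist_eq] using hτ)
    rw [Real.dist_eq, hqs] at this
    cases' abs_lt.mp this with hl hr
    linarith
  -- key: if q ≥ 0 on [s,c] then y c > 0
  have key : ∀ c, s < c → (∀ τ ∈ Set.Icc s c, 0 ≤ q τ) → 0 < y c := by
    intro c hc hqpos
    obtain ⟨g, hgdef⟩ : ∃ g : ℝ → ℝ, g = fun τ => Real.exp (μ * τ) * y τ := ⟨_, rfl⟩
    have hgval : ∀ τ, g τ = Real.exp (μ * τ) * y τ := fun τ => by rw [hgdef]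
    have hdg : ∀ τ, s ≤ τ → HasDerivAt g (Real.exp (μ * τ) * q τ) τ := by
      intro τ hτ
      have he : HasDerivAt (fun x => Real.exp (μ * x)) (Real.exp (μ * τ) * μ) τ := by
        simpa using (HasDerivAt.exp ((hasDerivAt_id τ).const_mul μ))
      have hmul : HasDerivAt (fun x => Real.exp (μ * x) * y x)
          (Real.exp (μ * τ) * μ * y τ + Real.exp (μ * τ) * y' τ) τ := he.mul (hy' τ hτ)
      rw [hgdef]
      convert hmul using 1
      rw [hqval]
      ring
    have hgs : g s = 0 := by rw [hgval, h1]; ring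
    set c' := min c (s + δ / 2) with hc'def
    have hc's : s < c' := lt_min hc (by linarith)
    have hc'c : c' ≤ c := min_le_left _ _
    have hstrict : StrictMonoOn g (Set.Icc s c') := by
      apply strictMonoOn_of_deriv_pos (convex_Icc s c')
      · exact fun x hx => ((hdg x hx.1).continuousAt).continuousWithinAt
      · intro x hx
        rw [interior_Icc] at hx
        rw [(hdg x hx.1.le).deriv]
        have hqx : 1/2 < q x := by
          apply hqnear
          rw [abs_lt]
          refine ⟨by linarith [hx.1], ?_⟩
          have : x < s + δ / 2 := lt_of_lt_of_le hx.2 (min_le_right _ _)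
          linarith
        positivity
    have hmono : MonotoneOn g (Set.Icc s c) := by
      apply monotoneOn_of_deriv_nonneg (convex_Icc s c)
      · exact fun x hx => ((hdg x hx.1).continuousAt).continuousWithinAt
      · intro x hx
        rw [interior_Icc] at hx
        exact ((hdg x hx.1.le).differentiableAt).differentiableWithinAt
      · intro x hx
        rw [interior_Icc] at hx
        rw [(hdg x hx.1.le).deriv]
        have := hqpos x ⟨hx.1.le, hx.2.le⟩
        positivity
    have h1' : g s < g c' := hstrict ⟨le_rfl, hc's.le⟩ ⟨hc's.le, le_rfl⟩ hc's
    have h2' : g c' ≤ g c := hmono ⟨hc's.le, hc'c⟩ ⟨hc.le, le_rfl⟩ hc'c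
    have hgc : 0 < g c := by rw [hgs] at h1'; linarith
    rw [hgval] at hgc
    have hexp : 0 < Real.exp (μ * c) := Real.exp_pos _
    nlinarith
  -- claim: q ≥ 0 on [s, ∞)
  have claim1 : ∀ τ, s ≤ τ → 0 ≤ q τ := by
    by_contra hcon
    push_neg at hcon
    obtain ⟨T, hTs, hqT⟩ := hcon
    set F := {x : ℝ | x ∈ Set.Icc s T ∧ q x < 0} with hFdef
    have hFne : F.Nonempty := ⟨T, ⟨hTs, le_rfl⟩, hqT⟩
    have hFbdd : BddBelow F := ⟨s, fun x hx => hx.1.1⟩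
    set u := sInf F with hudef
    have huF : ∀ x ∈ F, s + δ ≤ x := by
      intro x hx
      obtain ⟨⟨hx1, hx1'⟩, hx2⟩ := hx
      by_contra hxc
      push_neg at hxc
      have habs : |x - s| < δ := by
        rw [abs_lt]
        exact ⟨by linarith, by linarith⟩
      have := hqnear x habs
      linarith
    have hus : s + δ ≤ u := le_csInf hFne huF
    have husT : u ≤ T := csInf_le hFbdd ⟨⟨hTs, le_rfl⟩, hqT⟩
    have hu_s : s < u := by linarith
    -- q u ≥ 0 by left-continuity
    have hqu : 0 ≤ q u := by
      have htend : Filter.Tendsto q (nhdsWithin u (Set.Iio u)) (nhds (q u)) :=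
        ((hcq u (by linarith)).continuousWithinAt)
      apply ge_of_tendsto htend
      filter_upwards [Ioo_mem_nhdsLT_of_mem (⟨hu_s, le_rfl⟩ : u ∈ Set.Ioc s u)] with x hx
      by_contra hqx
      push_neg at hqx
      have hxF : x ∈ F := ⟨⟨hx.1.le, le_trans hx.2.le husT⟩, hqx⟩
      have := csInf_le hFbdd hxF
      exact absurd this (not_le.mpr hx.2)
    -- y u > 0
    have hyu : 0 < y u := by
      apply key u hu_s
      intro τ hτ
      rcases eq_or_lt_of_le hτ.2 with heq | hlt
      · rw [heq]; exact hqu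
      · by_contra hqτ
        push_neg at hqτ
        have hτF : τ ∈ F := ⟨⟨hτ.1, le_trans hlt.le husT⟩, hqτ⟩
        have := csInf_le hFbdd hτF
        exact absurd this (not_le.mpr hlt)
    -- y > 0 near u
    obtain ⟨η, hηpos, hη⟩ := Metric.continuousAt_iff.mp (hcy u (by linarith)) (y u) hyu
    have hynear : ∀ x, |x - u| < η → 0 < y x := by
      intro x hx
      have := hη (show dist x u < η by simpa [Real.dist_eq] using hx)
      rw [Real.dist_eq] at this
      cases' abs_lt.mp this with hl hr
      linarith
    -- pick t₂ ∈ F with t₂ < u + η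
    obtain ⟨t₂, ht₂F, ht₂lt⟩ := exists_lt_of_csInf_lt hFne
      (show sInf F < u + η by rw [← hudef]; linarith)
    have hut₂ : u ≤ t₂ := csInf_le hFbdd ht₂F
    have hqt₂ : q t₂ < 0 := ht₂F.2
    -- G: points of [u,t₂] where q ≥ 0
    set G := {x : ℝ | x ∈ Set.Icc u t₂ ∧ 0 ≤ q x} with hGdef
    have hGne : G.Nonempty := ⟨u, ⟨le_rfl, hut₂⟩, hqu⟩
    have hGbdd : BddAbove G := ⟨t₂, fun x hx => hx.1.2⟩
    have hGclosed : IsClosed G := by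
      have hqcont : ContinuousOn q (Set.Icc u t₂) := fun x hx =>
        ((hcq x (by linarith [hx.1])).continuousWithinAt)
      have hGeq : G = Set.Icc u t₂ ∩ q ⁻¹' Set.Ici 0 := by
        ext x
        simp only [hGdef, Set.mem_setOf_eq, Set.mem_inter_iff, Set.mem_preimage,
          Set.mem_Ici]
      rw [hGeq]
      exact hqcont.preimage_isClosed_of_isClosed isClosed_Icc isClosed_Ici
    have hGcompact : IsCompact G :=
      isCompact_Icc.of_isClosed_subset hGclosed (fun x hx => hx.1)
    set t₁ := sSup G with ht₁def
    have ht₁G : t₁ ∈ G := hGcompact.sSup_mem hGne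
    have ht₁u : u ≤ t₁ := ht₁G.1.1
    have ht₁t₂ : t₁ ≤ t₂ := ht₁G.1.2
    have hqt₁ : 0 ≤ q t₁ := ht₁G.2
    have ht₁lt : t₁ < t₂ := by
      rcases eq_or_lt_of_le ht₁t₂ with heq | h
      · exfalso; rw [heq] at hqt₁; linarith
      · exact h
    have hqneg : ∀ τ, t₁ < τ → τ ≤ t₂ → q τ < 0 := by
      intro τ hτ1 hτ2
      by_contra hqτ
      push_neg at hqτ
      have hτG : τ ∈ G := ⟨⟨le_trans ht₁u hτ1.le, hτ2⟩, hqτ⟩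
      have := le_csSup hGbdd hτG
      exact absurd this (not_le.mpr hτ1)
    have hsm : StrictMonoOn q (Set.Icc t₁ t₂) := by
      apply strictMonoOn_of_deriv_pos (convex_Icc t₁ t₂)
      · exact fun x hx => (hcq x (by linarith [hx.1])).continuousWithinAt
      · intro x hx
        rw [interior_Icc] at hx
        have hxs : s ≤ x := by linarith [hx.1]
        rw [(hdq x hxs).deriv]
        have hqx : q x < 0 := hqneg x hx.1 hx.2.le
        have hyx : 0 < y x := by
          apply hynear
          rw [abs_lt]
          exact ⟨by linarith [hx.1], by linarith [hx.2]⟩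
        have hax : a₀ ≤ a x := halow x (by linarith)
        have hcoef : 0 ≤ μ * a x - μ ^ 2 - b x := hdcoef x hxs
        nlinarith
    have := hsm ⟨le_rfl, ht₁t₂⟩ ⟨ht₁t₂, le_rfl⟩ ht₁lt
    linarith
  intro t ht
  exact key t ht (fun τ hτ => claim1 τ hτ.1)
end

section
/- Let a, b, a₁, b₁ be real constants with a > 0, b > 0, a² > 4b, and suppose (2a / (√(a²-4b)(a - √(a²-4b)))) |a₁| + (1/b) |b₁| < 1. Let Y solve y'' + ay' + by = 0, Y(0)=0, Y'(0)=1. Then the linear operator H on bounded measurable functions z : [0,∞) → ℝ defined by (Hz)(t) = a₁ ∫₀ᵗ Y'(t-s) z(s) ds + b₁ ∫₀ᵗ Y(t-s) z(s) ds satisfies ‖Hz‖_∞ ≤ q ‖z‖_∞ for q := (2a / (√(a²-4b)(a-√(a²-4b)))) |a₁| + (1/b)|b₁| < 1. -/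
open MeasureTheory Real Set


lemma first_order_aux (Y : ℝ → ℝ) (hY1 : Differentiable ℝ Y)
    (hY2 : Differentiable ℝ (deriv Y)) (r ρ : ℝ)
    (hder : ∀ t, deriv (deriv Y) t - r * deriv Y t = ρ * (deriv Y t - r * Y t)) :
    ∀ t, deriv Y t - r * Y t = Real.exp (ρ * t) * (deriv Y 0 - r * Y 0) := by
  set g : ℝ → ℝ := fun t => Real.exp (-ρ * t) * (deriv Y t - r * Y t) with hg
  have hgd : ∀ t, HasDerivAt g 0 t := by
    intro t
    have h1 : HasDerivAt (fun t : ℝ => Real.exp (-ρ * t)) (Real.exp (-ρ * t) * (-ρ)) t := by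
      simpa using ((hasDerivAt_id t).const_mul (-ρ)).exp
    have h2 : HasDerivAt (fun t => deriv Y t - r * Y t)
        (deriv (deriv Y) t - r * deriv Y t) t :=
      ((hY2 t).hasDerivAt).sub (((hY1 t).hasDerivAt).const_mul r)
    have := h1.mul h2
    exact this.congr_deriv (by rw [hder t]; ring)
  have hconst : ∀ t, g t = g 0 := fun t =>
    is_const_of_deriv_eq_zero (fun x => (hgd x).differentiableAt)
      (fun x => (hgd x).deriv) t 0
  intro t
  have h : g t = deriv Y 0 - r * Y 0 := by rw [hconst t]; simp [hg]
  have hexp : Real.exp (ρ * t) * Real.exp (-ρ * t) = 1 := by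
    rw [← Real.exp_add]; simp
  have h2 : Real.exp (ρ * t) * g t = Real.exp (ρ * t) * (deriv Y 0 - r * Y 0) := by rw [h]
  calc deriv Y t - r * Y t
      = Real.exp (ρ * t) * Real.exp (-ρ * t) * (deriv Y t - r * Y t) := by rw [hexp]; ring
    _ = Real.exp (ρ * t) * g t := by rw [hg]; ring
    _ = Real.exp (ρ * t) * (deriv Y 0 - r * Y 0) := h2


lemma integral_exp_mul_aux (r : ℝ) (hr : r ≠ 0) (t : ℝ) :
    ∫ u in (0:ℝ)..t, Real.exp (r * u) = (Real.exp (r * t) - 1) / r := by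
  have h : ∀ u ∈ Set.uIcc (0:ℝ) t,
      HasDerivAt (fun u => Real.exp (r * u) / r) (Real.exp (r * u)) u := by
    intro u _
    have : HasDerivAt (fun u : ℝ => Real.exp (r * u)) (Real.exp (r * u) * r) u := by
      simpa using ((hasDerivAt_id u).const_mul r).exp
    simpa [mul_div_assoc, mul_div_cancel_right₀ _ hr] using this.div_const r
  have hint : IntervalIntegrable (fun u => Real.exp (r * u)) MeasureTheory.volume 0 t :=
    (Real.continuous_exp.comp (continuous_const.mul continuous_id)).intervalIntegrable 0 t
  rw [intervalIntegral.integral_eq_sub_of_hasDerivAt h hint]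
  simp [sub_div]

lemma cexp (r : ℝ) : Continuous fun u : ℝ => Real.exp (r * u) :=
  Real.continuous_exp.comp (continuous_const.mul continuous_id)

lemma intY_bound (r₁ r₂ d : ℝ) (h2 : r₂ < r₁) (h1 : r₁ < 0) (hdiff : r₁ - r₂ = d)
    (t : ℝ) (ht : 0 ≤ t) :
    (∫ u in (0:ℝ)..t, |(Real.exp (r₁ * u) - Real.exp (r₂ * u)) / d|) ≤ 1 / (r₁ * r₂) := by
  have hd : 0 < d := by linarith
  have hb : 0 < r₁ * r₂ := mul_pos_of_neg_of_neg h1 (by linarith)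
  have hcong : EqOn (fun u => |(Real.exp (r₁ * u) - Real.exp (r₂ * u)) / d|)
      (fun u => (Real.exp (r₁ * u) - Real.exp (r₂ * u)) / d) (uIcc 0 t) := by
    intro u hu
    rw [uIcc_of_le ht] at hu
    have hu0 : 0 ≤ u := hu.1
    have : Real.exp (r₂ * u) ≤ Real.exp (r₁ * u) :=
      Real.exp_le_exp.mpr (mul_le_mul_of_nonneg_right h2.le hu0)
    exact abs_of_nonneg (div_nonneg (by linarith) hd.le)
  rw [intervalIntegral.integral_congr hcong]
  have hint1 := (cexp r₁).intervalIntegrable (μ := volume) 0 t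
  have hint2 := (cexp r₂).intervalIntegrable (μ := volume) 0 t
  rw [show (fun u => (Real.exp (r₁ * u) - Real.exp (r₂ * u)) / d)
      = fun u => (Real.exp (r₁ * u) - Real.exp (r₂ * u)) / d from rfl]
  rw [intervalIntegral.integral_div, intervalIntegral.integral_sub hint1 hint2,
    integral_exp_mul_aux r₁ h1.ne t, integral_exp_mul_aux r₂ (by linarith : r₂ ≠ 0) t]
  set A := Real.exp (r₁ * t) with hA
  set B := Real.exp (r₂ * t) with hB
  have hBpos : 0 < B := Real.exp_pos _
  have hBA : B ≤ A := Real.exp_le_exp.mpr (mul_le_mul_of_nonneg_right h2.le ht)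
  have hA1 : A ≤ 1 := Real.exp_le_one_iff.mpr (mul_nonpos_of_nonpos_of_nonneg h1.le ht)
  rw [div_le_div_iff₀ hd hb]
  have hid : ((A - 1) / r₁ - (B - 1) / r₂) * (r₁ * r₂) = r₂ * (A - 1) - r₁ * (B - 1) := by
    have hr1 : r₁ ≠ 0 := h1.ne
    have hr2 : r₂ ≠ 0 := by linarith
    field_simp
  rw [hid]
  have hkey : (-r₁) * B ≤ (-r₂) * A :=
    mul_le_mul (by linarith) hBA hBpos.le (by linarith)
  linarith

lemma intY'_bound (r₁ r₂ d : ℝ) (h2 : r₂ < r₁) (h1 : r₁ < 0) (hdiff : r₁ - r₂ = d)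
    (t : ℝ) (ht : 0 ≤ t) :
    (∫ u in (0:ℝ)..t, |(r₁ * Real.exp (r₁ * u) - r₂ * Real.exp (r₂ * u)) / d|) ≤ 2 / d := by
  have hd : 0 < d := by linarith
  have hint1 := (cexp r₁).intervalIntegrable (μ := volume) 0 t
  have hint2 := (cexp r₂).intervalIntegrable (μ := volume) 0 t
  have hrhs : IntervalIntegrable
      (fun u => ((-r₁) * Real.exp (r₁ * u) + (-r₂) * Real.exp (r₂ * u)) / d) volume 0 t :=
    (((continuous_const.mul (cexp r₁)).add (continuous_const.mul (cexp r₂))).div_const d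
      ).intervalIntegrable 0 t
  have hlhs : IntervalIntegrable
      (fun u => |(r₁ * Real.exp (r₁ * u) - r₂ * Real.exp (r₂ * u)) / d|) volume 0 t :=
    ((((continuous_const.mul (cexp r₁)).sub (continuous_const.mul (cexp r₂))).div_const d
      ).abs).intervalIntegrable 0 t
  have hmono : (∫ u in (0:ℝ)..t, |(r₁ * Real.exp (r₁ * u) - r₂ * Real.exp (r₂ * u)) / d|)
      ≤ ∫ u in (0:ℝ)..t, ((-r₁) * Real.exp (r₁ * u) + (-r₂) * Real.exp (r₂ * u)) / d := by
    apply intervalIntegral.integral_mono_on ht hlhs hrhs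
    intro u _
    rw [abs_div, abs_of_pos hd]
    gcongr
    calc |r₁ * Real.exp (r₁ * u) - r₂ * Real.exp (r₂ * u)|
        ≤ |r₁ * Real.exp (r₁ * u)| + |r₂ * Real.exp (r₂ * u)| := abs_sub _ _
      _ = (-r₁) * Real.exp (r₁ * u) + (-r₂) * Real.exp (r₂ * u) := by
          rw [abs_mul, abs_mul, abs_of_neg h1, abs_of_neg (show r₂ < 0 by linarith),
            abs_of_pos (Real.exp_pos _), abs_of_pos (Real.exp_pos _)]
  refine hmono.trans ?_
  rw [show (fun u => ((-r₁) * Real.exp (r₁ * u) + (-r₂) * Real.exp (r₂ * u)) / d)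
      = fun u => ((-r₁) * Real.exp (r₁ * u) + (-r₂) * Real.exp (r₂ * u)) / d from rfl]
  rw [intervalIntegral.integral_div,
    intervalIntegral.integral_add ((hint1.const_mul (-r₁))) ((hint2.const_mul (-r₂))),
    intervalIntegral.integral_const_mul, intervalIntegral.integral_const_mul,
    integral_exp_mul_aux r₁ h1.ne t, integral_exp_mul_aux r₂ (by linarith : r₂ ≠ 0) t]
  have hA : 0 < Real.exp (r₁ * t) := Real.exp_pos _
  have hB : 0 < Real.exp (r₂ * t) := Real.exp_pos _
  have hid2 : (-r₁ * ((Real.exp (r₁ * t) - 1) / r₁) + -r₂ * ((Real.exp (r₂ * t) - 1) / r₂))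
      = (1 - Real.exp (r₁ * t)) + (1 - Real.exp (r₂ * t)) := by
    have hr1 : r₁ ≠ 0 := h1.ne
    have hr2 : r₂ ≠ 0 := by linarith
    field_simp
    ring
  rw [hid2]
  rw [div_le_div_iff₀ hd hd]
  nlinarith [hA, hB, hd]


lemma term_estimate (f z : ℝ → ℝ) (hf : Continuous f) (hz : Measurable z) (C K : ℝ)
    (hC : 0 ≤ C) (hzb : ∀ s ≥ (0:ℝ), |z s| ≤ C)
    (t : ℝ) (ht : 0 ≤ t)
    (hK : (∫ u in (0:ℝ)..t, |f u|) ≤ K) :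
    |∫ s in (0:ℝ)..t, f (t - s) * z s| ≤ C * K := by
  have hfc : Continuous fun s => f (t - s) := hf.comp (continuous_const.sub continuous_id)
  obtain ⟨M, hM⟩ := (isCompact_Icc (a:=(0:ℝ)) (b:=t)).exists_bound_of_continuousOn
    hfc.continuousOn
  have hmeas : Measurable fun s => f (t - s) * z s := (hfc.measurable).mul hz
  have hIg : IntervalIntegrable (fun s => f (t - s) * z s) volume 0 t := by
    rw [intervalIntegrable_iff, uIoc_of_le ht]
    apply Measure.integrableOn_of_bounded (M := M * C) measure_Ioc_lt_top.ne
      hmeas.aestronglyMeasurable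
    apply ae_restrict_of_forall_mem measurableSet_Ioc
    intro s hs
    have h1 : |f (t - s)| ≤ M := by simpa [Real.norm_eq_abs] using hM s ⟨hs.1.le, hs.2⟩
    have h2 : |z s| ≤ C := hzb s hs.1.le
    calc ‖f (t - s) * z s‖ = |f (t - s)| * |z s| := by rw [Real.norm_eq_abs, abs_mul]
      _ ≤ M * C := mul_le_mul h1 h2 (abs_nonneg _) (le_trans (abs_nonneg _) h1)
  have hIrhs : IntervalIntegrable (fun s => |f (t - s)| * C) volume 0 t :=
    ((hfc.abs).mul continuous_const).intervalIntegrable 0 t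
  calc |∫ s in (0:ℝ)..t, f (t - s) * z s|
      ≤ ∫ s in (0:ℝ)..t, |f (t - s) * z s| := by
        have := intervalIntegral.norm_integral_le_integral_norm
          (f := fun s => f (t - s) * z s) (μ := volume) ht
        simp only [Real.norm_eq_abs] at this
        exact this
    _ ≤ ∫ s in (0:ℝ)..t, |f (t - s)| * C := by
        apply intervalIntegral.integral_mono_on ht hIg.abs hIrhs
        intro s hs
        rw [abs_mul]
        exact mul_le_mul_of_nonneg_left (hzb s hs.1) (abs_nonneg _)
    _ = (∫ s in (0:ℝ)..t, |f (t - s)|) * C := intervalIntegral.integral_mul_const C _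
    _ = (∫ u in (0:ℝ)..t, |f u|) * C := by
        rw [intervalIntegral.integral_comp_sub_left (fun u => |f u|) t]
        norm_num
    _ ≤ K * C := mul_le_mul_of_nonneg_right hK hC
    _ = C * K := mul_comm _ _

/-- The contraction estimate for the operator
(Hz)(t) = a₁ ∫₀ᵗ Y'(t-s) z(s) ds + b₁ ∫₀ᵗ Y(t-s) z(s) ds in the overdamped case. -/
theorem operator_contraction (a b a₁ b₁ : ℝ) (ha : 0 < a) (hb : 0 < b)
    (hd : a ^ 2 > 4 * b)
    (hq : (2 * a / (Real.sqrt (a ^ 2 - 4 * b) * (a - Real.sqrt (a ^ 2 - 4 * b)))) * |a₁|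
        + (1 / b) * |b₁| < 1)
    (Y : ℝ → ℝ)
    (hY1 : Differentiable ℝ Y) (hY2 : Differentiable ℝ (deriv Y))
    (hode : ∀ t : ℝ, deriv (deriv Y) t + a * deriv Y t + b * Y t = 0)
    (h0 : Y 0 = 0) (h0' : deriv Y 0 = 1)
    (z : ℝ → ℝ) (hz : Measurable z) (C : ℝ)
    (hzb : ∀ t ≥ (0 : ℝ), |z t| ≤ C) :
    ∀ t ≥ (0 : ℝ),
      |a₁ * (∫ s in (0 : ℝ)..t, deriv Y (t - s) * z s)
          + b₁ * (∫ s in (0 : ℝ)..t, Y (t - s) * z s)|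
        ≤ ((2 * a / (Real.sqrt (a ^ 2 - 4 * b) * (a - Real.sqrt (a ^ 2 - 4 * b)))) * |a₁|
            + (1 / b) * |b₁|) * C := by
  set D := Real.sqrt (a ^ 2 - 4 * b) with hD
  have hd0 : (0:ℝ) < a ^ 2 - 4 * b := by linarith
  have hDpos : 0 < D := Real.sqrt_pos.mpr hd0
  have hDsq : D ^ 2 = a ^ 2 - 4 * b := Real.sq_sqrt hd0.le
  have hDa : D < a := by nlinarith [hDsq, hDpos, ha]
  set r₁ := (-a + D) / 2 with hr₁def
  set r₂ := (-a - D) / 2 with hr₂def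
  have hr₁ : r₁ < 0 := by rw [hr₁def]; linarith
  have hr₂ : r₂ < r₁ := by rw [hr₁def, hr₂def]; linarith
  have hsum : r₁ + r₂ = -a := by rw [hr₁def, hr₂def]; ring
  have hprod : r₁ * r₂ = b := by
    rw [hr₁def, hr₂def]
    nlinarith [hDsq]
  have hdiff : r₁ - r₂ = D := by rw [hr₁def, hr₂def]; ring
  -- the two first-order reductions
  have hE1 : ∀ t, deriv Y t - r₁ * Y t = Real.exp (r₂ * t) := by
    have := first_order_aux Y hY1 hY2 r₁ r₂ ?_
    · intro t; rw [this t, h0, h0']; ring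
    · intro t
      have h := hode t
      linear_combination h - deriv Y t * hsum + Y t * hprod
  have hE2 : ∀ t, deriv Y t - r₂ * Y t = Real.exp (r₁ * t) := by
    have := first_order_aux Y hY1 hY2 r₂ r₁ ?_
    · intro t; rw [this t, h0, h0']; ring
    · intro t
      have h := hode t
      linear_combination h - deriv Y t * hsum + Y t * hprod
  have hYf : ∀ t, Y t = (Real.exp (r₁ * t) - Real.exp (r₂ * t)) / D := by
    intro t
    have h1 := hE1 t
    have h2 := hE2 t
    have hDne : D ≠ 0 := hDpos.ne'
    rw [eq_div_iff hDne]
    linear_combination (h2 - h1) - Y t * hdiff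
  have hY'f : ∀ t, deriv Y t = (r₁ * Real.exp (r₁ * t) - r₂ * Real.exp (r₂ * t)) / D := by
    intro t
    have h2 := hE2 t
    have hDne : D ≠ 0 := hDpos.ne'
    rw [hYf t] at h2
    field_simp at h2 ⊢
    linear_combination h2 + Real.exp (r₁ * t) * hdiff
  have hC : 0 ≤ C := le_trans (abs_nonneg _) (hzb 0 le_rfl)
  intro t ht
  -- bounds on the kernels' integrals
  have hK1 : (∫ u in (0:ℝ)..t, |deriv Y u|) ≤ 2 / D := by
    have := intY'_bound r₁ r₂ D hr₂ hr₁ hdiff t ht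
    calc (∫ u in (0:ℝ)..t, |deriv Y u|)
        = ∫ u in (0:ℝ)..t, |(r₁ * Real.exp (r₁ * u) - r₂ * Real.exp (r₂ * u)) / D| := by
          apply intervalIntegral.integral_congr
          intro u _
          simp only [hY'f u]
      _ ≤ 2 / D := this
  have hK2 : (∫ u in (0:ℝ)..t, |Y u|) ≤ 1 / b := by
    have := intY_bound r₁ r₂ D hr₂ hr₁ hdiff t ht
    rw [hprod] at this
    calc (∫ u in (0:ℝ)..t, |Y u|)
        = ∫ u in (0:ℝ)..t, |(Real.exp (r₁ * u) - Real.exp (r₂ * u)) / D| := by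
          apply intervalIntegral.integral_congr
          intro u _
          simp only [hYf u]
      _ ≤ 1 / b := this
  have hT1 : |∫ s in (0:ℝ)..t, deriv Y (t - s) * z s| ≤ C * (2 / D) :=
    term_estimate (deriv Y) z hY2.continuous hz C (2 / D) hC hzb t ht hK1
  have hT2 : |∫ s in (0:ℝ)..t, Y (t - s) * z s| ≤ C * (1 / b) :=
    term_estimate Y z hY1.continuous hz C (1 / b) hC hzb t ht hK2
  have h2D : 2 / D ≤ 2 * a / (D * (a - D)) := by
    rw [div_le_div_iff₀ hDpos (mul_pos hDpos (by linarith : (0:ℝ) < a - D))]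
    nlinarith [hDpos, hDa]
  calc |a₁ * (∫ s in (0:ℝ)..t, deriv Y (t - s) * z s)
        + b₁ * (∫ s in (0:ℝ)..t, Y (t - s) * z s)|
      ≤ |a₁| * |∫ s in (0:ℝ)..t, deriv Y (t - s) * z s|
        + |b₁| * |∫ s in (0:ℝ)..t, Y (t - s) * z s| := by
        refine (abs_add_le _ _).trans ?_
        rw [abs_mul, abs_mul]
    _ ≤ |a₁| * (C * (2 * a / (D * (a - D)))) + |b₁| * (C * (1 / b)) := by
        have h1 : |a₁| * |∫ s in (0:ℝ)..t, deriv Y (t - s) * z s|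
            ≤ |a₁| * (C * (2 * a / (D * (a - D)))) :=
          mul_le_mul_of_nonneg_left
            (hT1.trans (mul_le_mul_of_nonneg_left h2D hC)) (abs_nonneg _)
        have h2 : |b₁| * |∫ s in (0:ℝ)..t, Y (t - s) * z s| ≤ |b₁| * (C * (1 / b)) :=
          mul_le_mul_of_nonneg_left hT2 (abs_nonneg _)
        linarith
    _ = ((2 * a / (D * (a - D))) * |a₁| + (1 / b) * |b₁|) * C := by ring
end

section
/- Let a : [0,∞) → ℝ be measurable, bounded, nonnegative, and let g : [0,∞) → ℝ be measurable with g(t) ≤ t and t - g(t) ≤ δ for some δ > 0 with δ · (sup a) < 1. Suppose x : ℝ → ℝ is bounded on [0,T], differentiable with bounded derivative on [0,T], x(t)=x'(t)=0 for t ≤ 0, and satisfies x'(t) = F(t) + a(t)(x(t) - x(g(t))) on [0,T] with |F(t)| ≤ K. Then sup_{[0,T]} |x'| ≤ K / (1 - δ sup a). -/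
/-- A priori derivative estimate: from x'(t) = F(t) + a(t)(x(t) - x(g(t))) with
|F| ≤ K, t - g(t) ≤ δ, 0 ≤ a ≤ A and δA < 1, one gets sup_{[0,T]} |x'| ≤ K/(1-δA). -/
theorem apriori_derivative_estimate (a g F : ℝ → ℝ) (A δ K T : ℝ)
    (hma : Measurable a)
    (hA : ∀ t ≥ (0 : ℝ), a t ≤ A) (hapos : ∀ t ≥ (0 : ℝ), 0 ≤ a t)
    (hg : ∀ t ≥ (0 : ℝ), g t ≤ t) (hδ : 0 < δ)
    (hgd : ∀ t ≥ (0 : ℝ), t - g t ≤ δ)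
    (hsmall : δ * A < 1)
    (hT : 0 < T)
    (x x' : ℝ → ℝ)
    (hxb : ∃ M : ℝ, ∀ t ∈ Set.Icc (0 : ℝ) T, |x t| ≤ M)
    (hx'b : ∃ M : ℝ, ∀ t ∈ Set.Icc (0 : ℝ) T, |x' t| ≤ M)
    (hderiv : ∀ t ≤ T, HasDerivAt x (x' t) t)
    (hzero : ∀ t ≤ (0 : ℝ), x t = 0 ∧ x' t = 0)
    (hode : ∀ t ∈ Set.Icc (0 : ℝ) T, x' t = F t + a t * (x t - x (g t)))
    (hF : ∀ t ∈ Set.Icc (0 : ℝ) T, |F t| ≤ K) :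
    ∀ t ∈ Set.Icc (0 : ℝ) T, |x' t| ≤ K / (1 - δ * A) := by
  obtain ⟨M, hM⟩ := hx'b
  set S := sSup ((fun t => |x' t|) '' Set.Icc 0 T) with hSdef
  have hne : ((fun t => |x' t|) '' Set.Icc 0 T).Nonempty :=
    ⟨_, ⟨0, ⟨le_refl 0, hT.le⟩, rfl⟩⟩
  have hbdd : BddAbove ((fun t => |x' t|) '' Set.Icc 0 T) :=
    ⟨M, by rintro _ ⟨t, ht, rfl⟩; exact hM t ht⟩
  have hle : ∀ t ∈ Set.Icc (0:ℝ) T, |x' t| ≤ S := fun t ht => le_csSup hbdd ⟨t, ht, rfl⟩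
  have hS0 : 0 ≤ S := le_trans (abs_nonneg _) (hle 0 ⟨le_refl 0, hT.le⟩)
  have hK0 : 0 ≤ K := le_trans (abs_nonneg _) (hF 0 ⟨le_refl 0, hT.le⟩)
  have hden : 0 < 1 - δ * A := by linarith
  have key : ∀ t ∈ Set.Icc (0:ℝ) T, |x' t| ≤ K + δ * A * S := by
    intro t ht
    obtain ⟨ht0, htT⟩ := ht
    have hgt := hg t ht0
    have hbound : ∀ s ∈ Set.Icc (g t) t, ‖x' s‖ ≤ S := by
      intro s hs
      rcases le_or_gt s 0 with h | h
      · rw [Real.norm_eq_abs, (hzero s h).2, abs_zero]; exact hS0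
      · exact hle s ⟨h.le, hs.2.trans htT⟩
    have hd : ∀ s ∈ Set.Icc (g t) t, HasDerivWithinAt x (x' s) (Set.Icc (g t) t) s :=
      fun s hs => (hderiv s (hs.2.trans htT)).hasDerivWithinAt
    have hdiff := (convex_Icc (g t) t).norm_image_sub_le_of_norm_hasDerivWithin_le hd hbound
      (Set.left_mem_Icc.mpr hgt) (Set.right_mem_Icc.mpr hgt)
    rw [Real.norm_eq_abs, Real.norm_eq_abs, abs_of_nonneg (by linarith : (0:ℝ) ≤ t - g t)] at hdiff
    have hdelta := hgd t ht0
    have hdiff2 : |x t - x (g t)| ≤ S * δ := by nlinarith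
    have haA := hA t ht0
    have hap := hapos t ht0
    have hFt := hF t ⟨ht0, htT⟩
    rw [hode t ⟨ht0, htT⟩]
    calc |F t + a t * (x t - x (g t))| ≤ |F t| + |a t * (x t - x (g t))| := abs_add_le _ _
      _ = |F t| + a t * |x t - x (g t)| := by rw [abs_mul, abs_of_nonneg hap]
      _ ≤ K + δ * A * S := by nlinarith [abs_nonneg (x t - x (g t))]
  have hSle : S ≤ K + δ * A * S := by
    apply csSup_le hne
    rintro _ ⟨t, ht, rfl⟩
    exact key t ht
  have hSfinal : S ≤ K / (1 - δ * A) := by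
    rw [le_div_iff₀ hden]; nlinarith
  intro t ht
  exact (hle t ht).trans hSfinal
end
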